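/- For every non-decreasing function F : (0,∞) → (0,1], there exist a compact metric space (S,d), a Borel probability measure μ on S, and ε₀ > 0 such that the distance distribution θ of (S,d,μ) satisfies θ([0,ε]) ≤ F(ε) for all ε ∈ (0, ε₀]. -/

import Mathlib

open MeasureTheory

private lemma aux_floor_eq (b : ℕ → ℕ) (hb : ∀ k, 0 < b k) :
    ∀ (N : ℕ) (x y : ℝ), 0 ≤ x → x < 1 → 0 ≤ y → y < 1 →
    (∀ k < N, ⌊((∏ i ∈ Finset.range (k+1), b i : ℕ) : ℝ) * x⌋₊ % b k
      = ⌊((∏ i ∈ Finset.range (k+1), b i : ℕ) : ℝ) * y⌋₊ % b k) →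
    ⌊((∏ i ∈ Finset.range N, b i : ℕ) : ℝ) * x⌋₊
      = ⌊((∏ i ∈ Finset.range N, b i : ℕ) : ℝ) * y⌋₊ := by
  intro N
  induction N with
  | zero =>
    intro x y hx0 hx1 hy0 hy1 _
    simp only [Finset.range_zero, Finset.prod_empty, Nat.cast_one, one_mul]
    rw [Nat.floor_eq_zero.2 hx1, Nat.floor_eq_zero.2 hy1]
  | succ N ih =>
    intro x y hx0 hx1 hy0 hy1 hagree
    have hbN : (0:ℝ) < b N := by exact_mod_cast hb N
    have hdiv : ∀ z : ℝ, 0 ≤ z →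
        ⌊((∏ i ∈ Finset.range (N+1), b i : ℕ) : ℝ) * z⌋₊ / b N
          = ⌊((∏ i ∈ Finset.range N, b i : ℕ) : ℝ) * z⌋₊ := by
      intro z hz
      rw [← Nat.floor_div_natCast]
      congr 1
      rw [Finset.prod_range_succ]
      push_cast
      field_simp
    have hx := Nat.div_add_mod (⌊((∏ i ∈ Finset.range (N+1), b i : ℕ) : ℝ) * x⌋₊) (b N)
    have hy := Nat.div_add_mod (⌊((∏ i ∈ Finset.range (N+1), b i : ℕ) : ℝ) * y⌋₊) (b N)
    have hIH := ih x y hx0 hx1 hy0 hy1 (fun k hk => hagree k (by omega))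
    have hmod := hagree N (by omega)
    rw [← hx, ← hy, hdiv x hx0, hdiv y hy0, hIH, hmod]

/-- For every non-decreasing function `F : (0, ∞) → (0, 1]`, there exist a
compact metric space `(S, d)`, a Borel probability measure `μ` on `S`, and `ε₀ > 0` such
that the distance distribution `θ` of `(S, d, μ)` (the pushforward of `μ ⊗ μ` under
`(x, y) ↦ dist x y`) satisfies `θ [0, ε] ≤ F ε` for all `ε ∈ (0, ε₀]`. -/
theorem exists_compact_space_distance_distribution_le
    (F : ℝ → ℝ)
    (hF_mono : ∀ ⦃x y : ℝ⦄, 0 < x → x ≤ y → F x ≤ F y)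
    (hF_pos : ∀ x : ℝ, 0 < x → 0 < F x)
    (hF_le_one : ∀ x : ℝ, 0 < x → F x ≤ 1) :
    ∃ (S : Type) (_ : MetricSpace S) (_ : MeasurableSpace S) (_ : BorelSpace S)
      (μ : Measure S) (_ : IsProbabilityMeasure μ),
      CompactSpace S ∧
      ∃ ε₀ : ℝ, 0 < ε₀ ∧ ∀ ε : ℝ, 0 < ε → ε ≤ ε₀ →
        ((μ.prod μ).map (fun p : S × S => dist p.1 p.2)) (Set.Icc 0 ε)
          ≤ ENNReal.ofReal (F ε) := by
  classical
  -- the branching factors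
  set b : ℕ → ℕ := fun k => max 2 ⌈(F ((1/2:ℝ) ^ (k+1)))⁻¹⌉₊ with hbdef
  have hb2 : ∀ k, 2 ≤ b k := fun k => le_max_left _ _
  have hb : ∀ k, 0 < b k := fun k => lt_of_lt_of_le two_pos (hb2 k)
  set B : ℕ → ℕ := fun N => ∏ i ∈ Finset.range N, b i with hBdef
  have hBpos : ∀ N, 0 < B N := fun N => Finset.prod_pos fun k _ => hb k
  have hBposR : ∀ N, (0:ℝ) < (B N : ℝ) := fun N => by exact_mod_cast hBpos N
  -- the key inequality : 1 / B (N+1) ≤ F ((1/2)^(N+1))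
  have hBF : ∀ N : ℕ, ((B (N+1) : ℝ))⁻¹ ≤ F ((1/2:ℝ) ^ (N+1)) := by
    intro N
    have hFp : 0 < F ((1/2:ℝ) ^ (N+1)) := hF_pos _ (by positivity)
    have h1 : (F ((1/2:ℝ) ^ (N+1)))⁻¹ ≤ (b N : ℝ) := by
      refine le_trans (Nat.le_ceil _) ?_
      exact_mod_cast Nat.cast_le.2 (le_max_right 2 _)
    have h2 : (b N : ℝ) ≤ (B (N+1) : ℝ) := by
      have : B (N+1) = B N * b N := Finset.prod_range_succ _ _
      rw [this]
      exact_mod_cast Nat.le_mul_of_pos_left _ (hBpos N)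
    have h3 : (F ((1/2:ℝ) ^ (N+1)))⁻¹ ≤ (B (N+1) : ℝ) := h1.trans h2
    calc ((B (N+1) : ℝ))⁻¹ ≤ ((F ((1/2:ℝ) ^ (N+1)))⁻¹)⁻¹ :=
          inv_anti₀ (by positivity) h3
      _ = F ((1/2:ℝ) ^ (N+1)) := inv_inv _
  -- the space
  set S := ∀ k : ℕ, Fin (b k) with hSdef
  letI mS : MetricSpace S := PiNat.metricSpace
  haveI : SecondCountableTopology S := by
    show @SecondCountableTopology (∀ k : ℕ, Fin (b k)) Pi.topologicalSpace
    infer_instance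
  haveI : BorelSpace S := by
    show @BorelSpace (∀ k : ℕ, Fin (b k)) Pi.topologicalSpace _
    exact Pi.borelSpace
  haveI : CompactSpace S := by
    show @CompactSpace (∀ k : ℕ, Fin (b k)) Pi.topologicalSpace
    infer_instance
  -- the digit map
  set h : ℝ → S := fun x k => (⟨⌊(B (k+1) : ℝ) * x⌋₊ % b k, Nat.mod_lt _ (hb k)⟩ : Fin (b k))
    with hhdef
  have hh : Measurable h := by
    refine measurable_pi_iff.2 fun k => ?_
    have h1 : Measurable fun x : ℝ => ⌊(B (k+1) : ℝ) * x⌋₊ :=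
      Nat.measurable_floor.comp (measurable_id.const_mul _)
    exact (measurable_from_top (f := fun n : ℕ => (⟨n % b k, Nat.mod_lt _ (hb k)⟩ : Fin (b k)))).comp h1
  set μ₀ : Measure ℝ := volume.restrict (Set.Ico (0:ℝ) 1) with hμ₀def
  haveI : IsProbabilityMeasure μ₀ := by
    constructor
    rw [Measure.restrict_apply_univ, Real.volume_Ico]
    simp
  set μ : Measure S := μ₀.map h with hμdef
  haveI : IsProbabilityMeasure μ := Measure.isProbabilityMeasure_map hh.aemeasurable
  refine ⟨S, mS, _, inferInstance, μ, inferInstance, inferInstance, 1/2, by norm_num,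
    fun ε hε hε2 => ?_⟩
  -- choose N with (1/2)^N ≤ ε < (1/2)^(N-1)
  have hex : ∃ n, (1/2:ℝ) ^ n ≤ ε := by
    obtain ⟨n, hn⟩ := exists_pow_lt_of_lt_one hε (by norm_num : (1/2:ℝ) < 1)
    exact ⟨n, hn.le⟩
  set N := Nat.find hex with hNdef
  have hNspec : (1/2:ℝ) ^ N ≤ ε := Nat.find_spec hex
  have hN1 : 1 ≤ N := by
    rcases Nat.eq_zero_or_pos N with h0 | h1
    · exfalso
      have := Nat.find_spec hex
      rw [← hNdef, h0] at this
      simp at this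
      linarith
    · exact h1
  have hNlt : ε < (1/2:ℝ) ^ (N - 1) := by
    have := Nat.find_min hex (m := N - 1) (by omega)
    exact lt_of_not_ge this
  -- measurability of dist
  have hD : Measurable (fun p : S × S => dist p.1 p.2) := measurable_dist
  have hIccM : MeasurableSet (Set.Icc (0:ℝ) ε) := measurableSet_Icc
  -- rewrite the measure
  rw [Measure.map_apply hD hIccM, hμdef, Measure.map_prod_map _ _ hh hh,
    Measure.map_apply (hh.prodMap hh) (hD hIccM)]
  -- now a statement about (μ₀.prod μ₀)
  have hprod : μ₀.prod μ₀ = (volume.prod volume).restrict (Set.Ico (0:ℝ) 1 ×ˢ Set.Ico (0:ℝ) 1) :=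
    Measure.prod_restrict _ _
  rw [hprod, Measure.restrict_apply ((hh.prodMap hh) (hD hIccM))]
  -- the inclusion into a union of squares
  set s : ℕ → Set ℝ := fun j => Set.Ico ((j : ℝ) / B N) (((j : ℝ) + 1) / B N) with hsdef
  have hsub : (Prod.map h h ⁻¹' ((fun p : S × S => dist p.1 p.2) ⁻¹' Set.Icc 0 ε))
      ∩ (Set.Ico (0:ℝ) 1 ×ˢ Set.Ico (0:ℝ) 1)
      ⊆ ⋃ j ∈ Finset.range (B N), s j ×ˢ s j := by
    rintro ⟨x, y⟩ ⟨hdist, hx, hy⟩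
    simp only [Set.mem_preimage, Prod.map_apply, Set.mem_Icc] at hdist
    have hx0 := hx.1; have hx1 := hx.2; have hy0 := hy.1; have hy1 := hy.2
    -- all coordinates < N agree
    have hagree : ∀ k < N, h x k = h y k := by
      intro k hk
      by_cases hxy : h x = h y
      · rw [hxy]
      · have hlt : dist (h x) (h y) < (1/2:ℝ) ^ (N - 1) := lt_of_le_of_lt hdist.2 hNlt
        have : @dist S PiNat.dist (h x) (h y) < (1/2:ℝ) ^ (N - 1) := hlt
        exact PiNat.apply_eq_of_dist_lt this (by omega)
    have hagree' : ∀ k < N, ⌊(B (k+1) : ℝ) * x⌋₊ % b k = ⌊(B (k+1) : ℝ) * y⌋₊ % b k := by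
      intro k hk
      have := hagree k hk
      rw [hhdef] at this
      exact congrArg Fin.val this
    have hfloor : ⌊(B N : ℝ) * x⌋₊ = ⌊(B N : ℝ) * y⌋₊ :=
      aux_floor_eq b hb N x y hx0 hx1 hy0 hy1 hagree'
    set j := ⌊(B N : ℝ) * x⌋₊ with hjdef
    have hjlt : j < B N := by
      rw [hjdef]
      rw [Nat.floor_lt (by positivity)]
      calc (B N : ℝ) * x < (B N : ℝ) * 1 := by
            exact mul_lt_mul_of_pos_left hx1 (hBposR N)
        _ = (B N : ℝ) := mul_one _
    have hmem : ∀ z : ℝ, 0 ≤ z → ⌊(B N : ℝ) * z⌋₊ = j → z ∈ s j := by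
      intro z hz hjz
      constructor
      · rw [div_le_iff₀ (hBposR N)]
        calc (j : ℝ) ≤ (B N : ℝ) * z := by rw [← hjz]; exact Nat.floor_le (by positivity)
          _ = z * (B N : ℝ) := mul_comm _ _
      · rw [lt_div_iff₀ (hBposR N)]
        calc z * (B N : ℝ) = (B N : ℝ) * z := mul_comm _ _
          _ < (j : ℝ) + 1 := by rw [← hjz]; exact Nat.lt_floor_add_one _
    simp only [Set.mem_iUnion, Finset.mem_range]
    exact ⟨j, hjlt, hmem x hx0 rfl, hmem y hy0 hfloor.symm⟩
  refine le_trans (measure_mono hsub) ?_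
  refine le_trans (measure_biUnion_finset_le _ _) ?_
  have hvol : ∀ j : ℕ, (volume.prod volume) (s j ×ˢ s j)
      = ENNReal.ofReal (1 / B N) * ENNReal.ofReal (1 / B N) := by
    intro j
    rw [Measure.prod_prod, hsdef]
    simp only [Real.volume_Ico]
    congr 2 <;> · rw [div_sub_div_same]; ring_nf
  rw [Finset.sum_congr rfl (fun j _ => hvol j), Finset.sum_const, Finset.card_range,
    nsmul_eq_mul]
  have hcalc : ((B N : ℕ) : ENNReal) * (ENNReal.ofReal (1 / B N) * ENNReal.ofReal (1 / B N))
      = ENNReal.ofReal (1 / B N) := by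
    rw [← ENNReal.ofReal_natCast (B N), ← ENNReal.ofReal_mul (by positivity),
      ← ENNReal.ofReal_mul (by positivity)]
    congr 1
    field_simp
  rw [hcalc]
  apply ENNReal.ofReal_le_ofReal
  have hF1 : (1 : ℝ) / B N ≤ F ((1/2:ℝ) ^ N) := by
    have := hBF (N - 1)
    have hNe : N - 1 + 1 = N := by omega
    rw [hNe] at this
    rw [one_div]
    exact this
  exact hF1.trans (hF_mono (by positivity) hNspec)
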